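/- arXiv:1412.6858 — 3 statements merged into one kernel-verified Lean document; each statement's English description precedes it below -/
import Mathlib

section
/- Let J : ℝⁿ → ℝ ∪ {+∞} be a proper lower semicontinuous convex function, γ > 0, and x, p ∈ ℝⁿ with p = prox_{γJ}(x). Let T be a linear subspace of ℝⁿ such that u − v ∈ T^⊥ for all u, v ∈ ∂J(p), and suppose ∂J(p) is nonempty; let e = P_T(u) for some (equivalently, any) u ∈ ∂J(p), where P_T is the orthogonal projection onto T. Then p = (p + P_T(x − p)) − γ e; equivalently, P_T(x − p) = γ e. (This is the affine-manifold case of the proximity-operator formula for partly smooth functions: p equals the projection of x onto the affine subspace p + T minus γ e.) -/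
noncomputable section
open Filter Topology

/-- `ℝⁿ` as a Euclidean space. -/
abbrev E (n : ℕ) := EuclideanSpace ℝ (Fin n)

/-- `u ∈ ∂J(p)`: `u` is a subgradient of `J` at `p`. -/
def IsSubgrad {n : ℕ} (J : E n → EReal) (p u : E n) : Prop :=
  ∀ y : E n, J p + ((inner ℝ u (y - p) : ℝ) : EReal) ≤ J y

/-- `p = prox_{γJ}(x)`: `p` minimizes `y ↦ γ J(y) + ½‖y − x‖²`. -/
def IsProx {n : ℕ} (J : E n → EReal) (γ : ℝ) (x p : E n) : Prop :=
  ∀ y : E n, (γ : EReal) * J p + ((‖p - x‖ ^ 2 / 2 : ℝ) : EReal)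
    ≤ (γ : EReal) * J y + ((‖y - x‖ ^ 2 / 2 : ℝ) : EReal)

/-- Convexity of an `EReal`-valued function. -/
def ConvexE {n : ℕ} (J : E n → EReal) : Prop :=
  ∀ x y : E n, ∀ a b : ℝ, 0 ≤ a → 0 ≤ b → a + b = 1 →
    J (a • x + b • y) ≤ (a : EReal) * J x + (b : EReal) * J y

/-- Proper: takes values in `ℝ ∪ {+∞}` (never `⊥`) and is not identically `+∞`. -/
def ProperE {n : ℕ} (J : E n → EReal) : Prop :=
  (∃ x, J x ≠ ⊤) ∧ ∀ x, J x ≠ ⊥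

/-- Orthogonal projection onto a subspace `T`, as an endomorphism of `ℝⁿ`. -/
def projCLM {n : ℕ} (T : Submodule ℝ (E n)) : E n →L[ℝ] E n :=
  T.subtypeL.comp (T.orthogonalProjectionOnto)

/-- Affine-manifold case of the proximity-operator formula: if `J` is proper
lsc convex, `p = prox_{γJ}(x)`, all differences of subgradients of `J` at `p` lie in `T^⊥`,
and `e = P_T u` for a subgradient `u ∈ ∂J(p)`, then `P_T(x − p) = γ e`, equivalently
`p = (p + P_T(x − p)) − γ e`. -/
theorem statement0 {n : ℕ} (J : E n → EReal)
    (hproper : ProperE J) (hlsc : LowerSemicontinuous J) (hconv : ConvexE J)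
    (γ : ℝ) (hγ : 0 < γ) (x p : E n) (hp : IsProx J γ x p)
    (T : Submodule ℝ (E n))
    (hT : ∀ u v : E n, IsSubgrad J p u → IsSubgrad J p v → u - v ∈ Tᗮ)
    (u : E n) (hu : IsSubgrad J p u) :
    projCLM T (x - p) = γ • projCLM T u ∧
      p = (p + projCLM T (x - p)) - γ • projCLM T u := by
  -- J p is finite
  obtain ⟨⟨y0, hy0⟩, hbot⟩ := hproper
  have hJp_ne_top : J p ≠ ⊤ := by
    intro htop
    have h := hp y0
    rw [htop, EReal.coe_mul_top_of_pos hγ] at h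
    have : (γ : EReal) * J y0 + ((‖y0 - x‖ ^ 2 / 2 : ℝ) : EReal) ≠ ⊤ := by
      lift J y0 to ℝ using ⟨hy0, hbot y0⟩ with a
      rw [← EReal.coe_mul, ← EReal.coe_add]
      exact EReal.coe_ne_top _
    exact this (top_le_iff.mp (le_trans (by simp) h))
  set Jp : ℝ := (J p).toReal with hJpdef
  have hJp : J p = (Jp : EReal) := (EReal.coe_toReal hJp_ne_top (hbot p)).symm
  -- subgradient property of w = γ⁻¹ • (x - p)
  have hsub : IsSubgrad J p (γ⁻¹ • (x - p)) := by
    intro y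
    by_cases hytop : J y = ⊤
    · rw [hytop]; exact le_top
    lift J y to ℝ using ⟨hytop, hbot y⟩ with Jy hJy
    -- key real inequality for t ∈ (0,1]
    have key : ∀ t : ℝ, 0 < t → t ≤ 1 →
        (inner ℝ (x - p) (y - p) : ℝ) - t * (‖y - p‖ ^ 2 / 2) ≤ γ * (Jy - Jp) := by
      intro t ht ht1
      have hconvt := hconv y p t (1 - t) ht.le (by linarith) (by ring)
      have hprox := hp (t • y + (1 - t) • p)
      have hchain : (γ : EReal) * (Jp : EReal) + ((‖p - x‖ ^ 2 / 2 : ℝ) : EReal)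
          ≤ (γ : EReal) * ((t : EReal) * (Jy : EReal) + ((1 - t : ℝ) : EReal) * (Jp : EReal))
            + ((‖t • y + (1 - t) • p - x‖ ^ 2 / 2 : ℝ) : EReal) := by
        rw [hJp] at hconvt hprox
        rw [← hJy] at hconvt
        refine le_trans hprox (add_le_add_left ?_ _)
        exact mul_le_mul_of_nonneg_left hconvt (by exact_mod_cast hγ.le)
      have hreal : γ * Jp + ‖p - x‖ ^ 2 / 2
          ≤ γ * (t * Jy + (1 - t) * Jp) + ‖t • y + (1 - t) • p - x‖ ^ 2 / 2 := by
        exact_mod_cast hchain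
      -- expand the norm
      have hexp : t • y + (1 - t) • p - x = (p - x) + t • (y - p) := by
        module
      have hnorm : ‖t • y + (1 - t) • p - x‖ ^ 2
          = ‖p - x‖ ^ 2 + 2 * t * (inner ℝ (p - x) (y - p) : ℝ) + t ^ 2 * ‖y - p‖ ^ 2 := by
        rw [hexp, @norm_add_sq_real, real_inner_smul_right, norm_smul]
        simp [mul_pow, abs_of_pos ht]
        ring
      have hinner : (inner ℝ (p - x) (y - p) : ℝ) = -(inner ℝ (x - p) (y - p) : ℝ) := by
        rw [← inner_neg_left]; congr 1; abel
      rw [hnorm, hinner] at hreal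
      have := hreal
      nlinarith [sq_nonneg t, ht]
    -- pass to the limit / epsilon argument
    have hlim : (inner ℝ (x - p) (y - p) : ℝ) ≤ γ * (Jy - Jp) := by
      by_contra hcon
      push_neg at hcon
      set c : ℝ := ‖y - p‖ ^ 2 / 2 with hc
      have hc0 : 0 ≤ c := by positivity
      set ε : ℝ := (inner ℝ (x - p) (y - p) : ℝ) - γ * (Jy - Jp) with hε
      have hε0 : 0 < ε := by simp only [hε]; linarith
      have ht0 : 0 < min 1 (ε / (c + 1)) := lt_min one_pos (by positivity)
      have := key _ ht0 (min_le_left _ _)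
      have h2 : min 1 (ε / (c + 1)) * c < ε := by
        calc min 1 (ε / (c + 1)) * c ≤ (ε / (c + 1)) * c :=
              mul_le_mul_of_nonneg_right (min_le_right _ _) hc0
          _ < ε := by
              rw [div_mul_eq_mul_div, div_lt_iff₀ (by linarith)]
              nlinarith
      linarith
    rw [hJp, real_inner_smul_left, ← EReal.coe_add, EReal.coe_le_coe_iff]
    have : γ⁻¹ * (inner ℝ (x - p) (y - p) : ℝ) ≤ Jy - Jp := by
      rw [inv_mul_le_iff₀ hγ] at *
      nlinarith [hlim]
    linarith
  -- conclude
  have hmem : u - γ⁻¹ • (x - p) ∈ Tᗮ := hT u _ hu hsub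
  have hz : projCLM T (u - γ⁻¹ • (x - p)) = 0 := by
    simp [projCLM, Submodule.orthogonalProjectionOnto_apply_of_mem_orthogonal hmem]
  have heq : projCLM T u = γ⁻¹ • projCLM T (x - p) := by
    rw [map_sub, map_smul, sub_eq_zero] at hz
    exact hz
  have h1 : projCLM T (x - p) = γ • projCLM T u := by
    rw [heq, smul_smul, mul_inv_cancel₀ hγ.ne', one_smul]
  exact ⟨h1, by rw [h1]; abel⟩
end
end

section
/- Let T_J and T_G be linear subspaces of ℝⁿ with orthogonal projections P_{T_J}, P_{T_G}, and let S_J = T_J^⊥, S_G = T_G^⊥ with projections P_{S_J}, P_{S_G}. Then the linear map M = I + 2 P_{T_G} P_{T_J} − P_{T_G} − P_{T_J} satisfies M = P_{T_G} P_{T_J} + P_{S_G} P_{S_J}, and its fixed-point set is Fix M = (T_J ∩ T_G) ⊕ (S_J ∩ S_G) (an orthogonal direct sum of subspaces). -/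
noncomputable section
open Filter Topology

/-- A linear map is symmetric positive semidefinite. -/
def IsSymPSD {n : ℕ} (A : E n →L[ℝ] E n) : Prop :=
  (∀ x y : E n, (inner ℝ (A x) y : ℝ) = inner ℝ x (A y)) ∧ ∀ x : E n, (0 : ℝ) ≤ inner ℝ (A x) x

/-- `W = P_T ∘ (I + P_T ∘ H ∘ P_T)⁻¹ ∘ P_T`, the building block of the Douglas–Rachford
fixed-point matrix (`Ring.inverse` is the genuine inverse since `I + P_T H P_T` is
invertible for symmetric positive semidefinite `H`). -/
def Wop {n : ℕ} (T : Submodule ℝ (E n)) (H : E n →L[ℝ] E n) : E n →L[ℝ] E n :=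
  projCLM T * Ring.inverse (1 + projCLM T * H * projCLM T) * projCLM T

/-- The Douglas–Rachford fixed-point matrix `M = I + 2 W_G W_J − W_G − W_J`. -/
def Mop {n : ℕ} (TJ TG : Submodule ℝ (E n)) (HJ HG : E n →L[ℝ] E n) : E n →L[ℝ] E n :=
  1 + (2 : ℝ) • (Wop TG HG * Wop TJ HJ) - Wop TG HG - Wop TJ HJ

/-- The relaxed matrix `M_λ = (1 − λ) I + λ M`. -/
def Mlam {n : ℕ} (lam : ℝ) (TJ TG : Submodule ℝ (E n)) (HJ HG : E n →L[ℝ] E n) :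
    E n →L[ℝ] E n :=
  (1 - lam) • (1 : E n →L[ℝ] E n) + lam • Mop TJ TG HJ HG

/-- The fixed-point set `Fix A = {x | A x = x}` as a submodule, i.e. `ker (A − I)`. -/
def FixM {n : ℕ} (A : E n →L[ℝ] E n) : Submodule ℝ (E n) :=
  LinearMap.ker ((A - 1 : E n →L[ℝ] E n) : E n →ₗ[ℝ] E n)

/-- `M^∞`: the orthogonal projection onto `Fix M`. -/
def Minf {n : ℕ} (TJ TG : Submodule ℝ (E n)) (HJ HG : E n →L[ℝ] E n) : E n →L[ℝ] E n :=
  projCLM (FixM (Mop TJ TG HJ HG))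

/-- The spectral radius of an endomorphism of `ℝⁿ`: the supremum of the moduli of the
complex eigenvalues (eigenvalues of the complexified matrix). -/
def specRad {n : ℕ} (A : E n →L[ℝ] E n) : ℝ :=
  sSup ((fun z : ℂ => ‖z‖) ''
    spectrum ℂ (((LinearMap.toMatrix (EuclideanSpace.basisFun (Fin n) ℝ).toBasis
      (EuclideanSpace.basisFun (Fin n) ℝ).toBasis) A.toLinearMap).map (algebraMap ℝ ℂ)))

/-- The cosine of the Friedrichs angle between two subspaces `U` and `V`. -/
def cF {n : ℕ} (U V : Submodule ℝ (E n)) : ℝ :=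
  sSup {r : ℝ | ∃ u v : E n, u ∈ U ⊓ (U ⊓ V)ᗮ ∧ v ∈ V ⊓ (U ⊓ V)ᗮ ∧
    ‖u‖ ≤ 1 ∧ ‖v‖ ≤ 1 ∧ r = (inner ℝ u v : ℝ)}

lemma projCLM_apply {n : ℕ} (T : Submodule ℝ (E n)) (x : E n) :
    projCLM T x = (T.orthogonalProjectionOnto x : E n) := rfl

lemma projCLM_mem {n : ℕ} (T : Submodule ℝ (E n)) (x : E n) : projCLM T x ∈ T :=
  (T.orthogonalProjectionOnto x).2

lemma projCLM_eq_self {n : ℕ} {T : Submodule ℝ (E n)} {x : E n} (h : x ∈ T) :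
    projCLM T x = x := by
  exact congrArg Subtype.val (T.orthogonalProjectionOnto_mem_subspace_eq_self ⟨x, h⟩)

lemma projCLM_eq_zero {n : ℕ} {T : Submodule ℝ (E n)} {x : E n} (h : x ∈ Tᗮ) :
    projCLM T x = 0 := by
  rw [projCLM_apply, Submodule.orthogonalProjectionOnto_apply_of_mem_orthogonal h]
  rfl

lemma projCLM_orthogonal {n : ℕ} (T : Submodule ℝ (E n)) :
    projCLM Tᗮ = 1 - projCLM T := by
  refine ContinuousLinearMap.ext fun x => ?_
  exact T.starProjection_orthogonal_val x

lemma norm_sq_proj {n : ℕ} (T : Submodule ℝ (E n)) (x : E n) :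
    ‖x‖^2 = ‖projCLM T x‖^2 + ‖x - projCLM T x‖^2 := by
  have h : (inner ℝ (projCLM T x) (x - projCLM T x) : ℝ) = 0 :=
    (Submodule.sub_starProjection_mem_orthogonal (K := T) x) _ (projCLM_mem T x)
  have := norm_add_sq_real (projCLM T x) (x - projCLM T x)
  rw [add_sub_cancel, h] at this
  linarith

lemma proj_norm_le {n : ℕ} (T : Submodule ℝ (E n)) (x : E n) :
    ‖projCLM T x‖^2 ≤ ‖x‖^2 := by
  have := norm_sq_proj T x
  nlinarith [sq_nonneg ‖x - projCLM T x‖]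

lemma proj_eq_of_norm_eq {n : ℕ} (T : Submodule ℝ (E n)) {x : E n}
    (h : ‖projCLM T x‖^2 = ‖x‖^2) : projCLM T x = x := by
  have h2 := norm_sq_proj T x
  have : ‖x - projCLM T x‖ = 0 := by nlinarith [sq_nonneg ‖x - projCLM T x‖]
  have := norm_eq_zero.mp this
  linear_combination (norm := abel) -this

/-- In the polyhedral case (`W_G = P_{T_G}`, `W_J = P_{T_J}`),
`M = I + 2 P_{T_G} P_{T_J} − P_{T_G} − P_{T_J} = P_{T_G} P_{T_J} + P_{S_G} P_{S_J}`, and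
`Fix M = (T_J ∩ T_G) ⊕ (S_J ∩ S_G)`, an orthogonal direct sum. -/
theorem statement12 {n : ℕ} (TJ TG : Submodule ℝ (E n)) :
    1 + (2 : ℝ) • (projCLM TG * projCLM TJ) - projCLM TG - projCLM TJ
      = projCLM TG * projCLM TJ + projCLM TGᗮ * projCLM TJᗮ ∧
    FixM (projCLM TG * projCLM TJ + projCLM TGᗮ * projCLM TJᗮ)
      = (TJ ⊓ TG) ⊔ (TJᗮ ⊓ TGᗮ) ∧
    (∀ u ∈ TJ ⊓ TG, ∀ v ∈ TJᗮ ⊓ TGᗮ, (inner ℝ u v : ℝ) = 0) := by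
  refine ⟨?_, ?_, ?_⟩
  · rw [projCLM_orthogonal, projCLM_orthogonal]
    have h2 : ((2:ℝ) • (projCLM TG * projCLM TJ)) = projCLM TG * projCLM TJ + projCLM TG * projCLM TJ := two_smul ℝ (projCLM TG * projCLM TJ)
    rw [h2, mul_sub, sub_mul, sub_mul, one_mul, mul_one]
    abel
  · apply le_antisymm
    · intro x hx
      have hx : projCLM TG (projCLM TJ x) + projCLM TGᗮ (projCLM TJᗮ x) = x := by
        have : (projCLM TG * projCLM TJ + projCLM TGᗮ * projCLM TJᗮ - 1) x = 0 := LinearMap.mem_ker.mp hx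
        simpa [sub_eq_zero] using this
      set a := projCLM TG (projCLM TJ x)
      set b := projCLM TGᗮ (projCLM TJᗮ x)
      have hab : (inner ℝ a b : ℝ) = 0 :=
        (projCLM_mem TGᗮ _) a (projCLM_mem TG _)
      have hQJ : projCLM TJᗮ x = x - projCLM TJ x := by rw [projCLM_orthogonal]; rfl
      have hx2 : ‖x‖^2 = ‖a‖^2 + ‖b‖^2 := by
        have := norm_add_sq_real a b
        rw [hx, hab] at this; linarith
      have hsplit : ‖projCLM TJ x‖^2 + ‖projCLM TJᗮ x‖^2 = ‖x‖^2 := by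
        rw [hQJ]; exact (norm_sq_proj TJ x).symm
      have h1 : ‖a‖^2 ≤ ‖projCLM TJ x‖^2 := proj_norm_le _ _
      have h2 : ‖b‖^2 ≤ ‖projCLM TJᗮ x‖^2 := proj_norm_le _ _
      have e1 : a = projCLM TJ x := proj_eq_of_norm_eq _ (by nlinarith)
      have e2 : b = projCLM TJᗮ x := proj_eq_of_norm_eq _ (by nlinarith)
      have hxsum : x = projCLM TJ x + projCLM TJᗮ x := by rw [← e1, ← e2, hx]
      rw [hxsum]
      refine Submodule.add_mem_sup ⟨projCLM_mem _ _, ?_⟩ ⟨projCLM_mem _ _, ?_⟩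
      · rw [← e1]; exact projCLM_mem _ _
      · rw [← e2]; exact projCLM_mem _ _
    · rw [sup_le_iff]
      constructor <;> intro x hx <;>
        simp only [FixM, LinearMap.mem_ker, ContinuousLinearMap.coe_sub', Pi.sub_apply,
          sub_eq_zero] <;>
        obtain ⟨h1, h2⟩ := hx
      · have : projCLM TJᗮ x = 0 := projCLM_eq_zero (TJ.le_orthogonal_orthogonal h1)
        simp [ContinuousLinearMap.mul_apply, this, projCLM_eq_self h1, projCLM_eq_self h2]
      · have : projCLM TJ x = 0 := projCLM_eq_zero h1
        simp [ContinuousLinearMap.mul_apply, this, projCLM_eq_self h1, projCLM_eq_self h2]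
  · intro u hu v hv
    exact hv.1 u hu.1
end
end

section
/- Global convergence of the relaxed Douglas–Rachford iteration: let J, G : ℝⁿ → ℝ ∪ {+∞} be proper lower semicontinuous convex functions, γ > 0, and let (λ_k) ⊆ (0,2] satisfy Σ_k λ_k(2−λ_k) = +∞. Let sequences (z^k), (x^k), (v^k) be generated by: v^{k+1} = prox_{γG}(2x^k − z^k); z^{k+1} = (1−λ_k) z^k + λ_k (z^k + v^{k+1} − x^k); x^{k+1} = prox_{γJ}(z^{k+1}). Assume the Douglas–Rachford operator B = ½(R_{γG} ∘ R_{γJ} + I), with R_{γJ} = 2 prox_{γJ} − I and R_{γG} = 2 prox_{γG} − I, has at least one fixed point. Then z^k converges to some z* with B(z*) = z*, x^k and v^k both converge to x* := prox_{γJ}(z*), and x* is a global minimizer of J + G, i.e., J(x*) + G(x*) ≤ J(y) + G(y) for all y ∈ ℝⁿ. -/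
noncomputable section
open Filter Topology

lemma prox_val_real {n : ℕ} {J : E n → EReal} (hprop : ProperE J) {γ : ℝ} (hγ : 0 < γ)
    {x p : E n} (h : IsProx J γ x p) : ∃ r : ℝ, J p = (r : EReal) := by
  obtain ⟨⟨x0, hx0⟩, hbot⟩ := hprop
  have htop : J p ≠ ⊤ := by
    intro htop
    have hx0' : J x0 = ((J x0).toReal : EReal) := (EReal.coe_toReal hx0 (hbot x0)).symm
    have h0 := h x0
    rw [htop, hx0', EReal.coe_mul_top_of_pos (by exact_mod_cast hγ), EReal.top_add_coe,
      ← EReal.coe_mul, ← EReal.coe_add] at h0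
    exact (EReal.coe_lt_top _).not_ge h0
  exact ⟨(J p).toReal, (EReal.coe_toReal htop (hbot p)).symm⟩

lemma prox_real_ineq {n : ℕ} {J : E n → EReal} (hprop : ProperE J) (hc : ConvexE J)
    {γ : ℝ} (hγ : 0 < γ) {x p : E n} (h : IsProx J γ x p) {q : E n} {jp jq : ℝ}
    (hp : J p = (jp : EReal)) (hq : J q = (jq : EReal)) :
    (inner ℝ (x - p) (q - p) : ℝ) ≤ γ * (jq - jp) := by
  have key : ∀ t : ℝ, 0 < t → t ≤ 1 →
      0 ≤ γ * (jq - jp) + (inner ℝ (p - x) (q - p) : ℝ) + t / 2 * ‖q - p‖ ^ 2 := by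
    intro t ht ht1
    set pt := (1 - t) • p + t • q with hptdef
    have hcv := hc p q (1 - t) t (by linarith) ht.le (by ring)
    rw [hp, hq, ← EReal.coe_mul, ← EReal.coe_mul, ← EReal.coe_add] at hcv
    have hptne : J pt ≠ ⊤ := by
      intro htp; rw [htp] at hcv; exact (EReal.coe_lt_top _).not_ge hcv
    have hptr : J pt = (((J pt).toReal : ℝ) : EReal) :=
      (EReal.coe_toReal hptne (hprop.2 pt)).symm
    set jt := (J pt).toReal
    have hjtle : jt ≤ (1 - t) * jp + t * jq := by
      rw [hptr] at hcv; exact_mod_cast hcv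
    have hpx := h pt
    rw [hp, hptr, ← EReal.coe_mul, ← EReal.coe_mul, ← EReal.coe_add, ← EReal.coe_add] at hpx
    have hpx' : γ * jp + ‖p - x‖ ^ 2 / 2 ≤ γ * jt + ‖pt - x‖ ^ 2 / 2 := by exact_mod_cast hpx
    have hd : pt - x = (p - x) + t • (q - p) := by rw [hptdef]; module
    have hnorm : ‖pt - x‖ ^ 2
        = ‖p - x‖ ^ 2 + 2 * (t * (inner ℝ (p - x) (q - p) : ℝ)) + t ^ 2 * ‖q - p‖ ^ 2 := by
      rw [hd, norm_add_sq_real, real_inner_smul_right, norm_smul]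
      rw [Real.norm_eq_abs, mul_pow, sq_abs]
    nlinarith [hγ, ht, sq_nonneg ‖q - p‖]
  have hA : 0 ≤ γ * (jq - jp) + (inner ℝ (p - x) (q - p) : ℝ) := by
    set A := γ * (jq - jp) + (inner ℝ (p - x) (q - p) : ℝ) with hAdef
    set B := ‖q - p‖ ^ 2 with hBdef
    have hB : (0:ℝ) ≤ B := sq_nonneg _
    by_contra hA
    push_neg at hA
    set t := min 1 (-A / (B + 1)) with htdef
    have ht0 : 0 < t := lt_min one_pos (div_pos (neg_pos.mpr hA) (by linarith))
    have ht1 : t ≤ 1 := min_le_left _ _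
    have hk := key t ht0 ht1
    have h2 : t ≤ -A / (B + 1) := min_le_right _ _
    have h3 : t * (B + 1) ≤ -A := by
      rw [← le_div_iff₀ (by linarith)]; exact h2
    nlinarith
  have hswap : (inner ℝ (x - p) (q - p) : ℝ) = -(inner ℝ (p - x) (q - p) : ℝ) := by
    have : x - p = -(p - x) := by abel
    rw [this, inner_neg_left]
  rw [hswap]; linarith

lemma prox_firm {n : ℕ} {J : E n → EReal} (hprop : ProperE J) (hc : ConvexE J)
    {γ : ℝ} (hγ : 0 < γ) {x y p q : E n}
    (h1 : IsProx J γ x p) (h2 : IsProx J γ y q) :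
    ‖p - q‖ ^ 2 ≤ (inner ℝ (p - q) (x - y) : ℝ) := by
  obtain ⟨jp, hp⟩ := prox_val_real hprop hγ h1
  obtain ⟨jq, hq⟩ := prox_val_real hprop hγ h2
  have h3 := prox_real_ineq hprop hc hγ h1 hp hq
  have h4 := prox_real_ineq hprop hc hγ h2 hq hp
  rw [← real_inner_self_eq_norm_sq]
  simp only [inner_sub_left, inner_sub_right] at h3 h4 ⊢
  linarith [real_inner_comm p q, real_inner_comm x q, real_inner_comm x p,
    real_inner_comm y p, real_inner_comm y q]

lemma prox_lip {n : ℕ} {J : E n → EReal} (hprop : ProperE J) (hc : ConvexE J)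
    {γ : ℝ} (hγ : 0 < γ) {x y p q : E n}
    (h1 : IsProx J γ x p) (h2 : IsProx J γ y q) :
    ‖p - q‖ ≤ ‖x - y‖ := by
  have hf := prox_firm hprop hc hγ h1 h2
  have hcs := real_inner_le_norm (p - q) (x - y)
  nlinarith [norm_nonneg (p - q), norm_nonneg (x - y)]

lemma reflect_lip {n : ℕ} {J : E n → EReal} (hprop : ProperE J) (hc : ConvexE J)
    {γ : ℝ} (hγ : 0 < γ) {x y p q : E n}
    (h1 : IsProx J γ x p) (h2 : IsProx J γ y q) :
    ‖((2:ℝ) • p - x) - ((2:ℝ) • q - y)‖ ≤ ‖x - y‖ := by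
  have hf := prox_firm hprop hc hγ h1 h2
  have hd : ((2:ℝ) • p - x) - ((2:ℝ) • q - y) = (2:ℝ) • (p - q) - (x - y) := by module
  have hsq : ‖((2:ℝ) • p - x) - ((2:ℝ) • q - y)‖ ^ 2 ≤ ‖x - y‖ ^ 2 := by
    rw [hd, norm_sub_sq_real, real_inner_smul_left, norm_smul]
    rw [Real.norm_eq_abs, mul_pow, sq_abs]
    nlinarith
  exact le_of_pow_le_pow_left₀ two_ne_zero (norm_nonneg _) hsq

lemma isSubgrad_of_prox {n : ℕ} {J : E n → EReal} (hprop : ProperE J) (hc : ConvexE J)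
    {γ : ℝ} (hγ : 0 < γ) {x p : E n} (h : IsProx J γ x p) :
    IsSubgrad J p (γ⁻¹ • (x - p)) := by
  obtain ⟨jp, hp⟩ := prox_val_real hprop hγ h
  intro y
  by_cases hy : J y = ⊤
  · rw [hy]; exact le_top
  · have hyr : J y = (((J y).toReal : ℝ) : EReal) := (EReal.coe_toReal hy (hprop.2 y)).symm
    set jy := (J y).toReal
    have hreal := prox_real_ineq hprop hc hγ h hp hyr
    rw [hp, hyr, ← EReal.coe_add, EReal.coe_le_coe_iff]
    rw [real_inner_smul_left]
    have h2 := mul_le_mul_of_nonneg_left hreal (inv_nonneg.mpr hγ.le)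
    rw [← mul_assoc, inv_mul_cancel₀ hγ.ne', one_mul] at h2
    linarith

set_option maxHeartbeats 1000000 in
/-- Global convergence of the relaxed Douglas–Rachford iteration:
with `pJ = prox_{γJ}`, `pG = prox_{γG}`, relaxation parameters `λ_k ∈ (0,2]` with
`Σ_k λ_k(2 − λ_k) = +∞`, and iterates `v^{k+1} = prox_{γG}(2x^k − z^k)`,
`z^{k+1} = (1 − λ_k) z^k + λ_k (z^k + v^{k+1} − x^k)`, `x^{k+1} = prox_{γJ}(z^{k+1})`, and
assuming the DR operator `B = ½(R_{γG} ∘ R_{γJ} + I)` has a fixed point, the sequence `z^k`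
converges to a fixed point `z*` of `B`, `x^k` and `v^k` converge to `x* = prox_{γJ}(z*)`,
and `x*` globally minimizes `J + G`. -/
theorem statement17 {n : ℕ} (J G : E n → EReal)
    (hJproper : ProperE J) (hJlsc : LowerSemicontinuous J) (hJconv : ConvexE J)
    (hGproper : ProperE G) (hGlsc : LowerSemicontinuous G) (hGconv : ConvexE G)
    (γ : ℝ) (hγ : 0 < γ)
    (pJ pG : E n → E n)
    (hpJ : ∀ w : E n, IsProx J γ w (pJ w))
    (hpG : ∀ w : E n, IsProx G γ w (pG w))
    (lam : ℕ → ℝ) (hlam : ∀ k, 0 < lam k ∧ lam k ≤ 2)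
    (hdiv : Tendsto (fun N => ∑ k ∈ Finset.range N, lam k * (2 - lam k)) atTop atTop)
    (z x v : ℕ → E n)
    (hv : ∀ k, v (k + 1) = pG ((2 : ℝ) • x k - z k))
    (hz : ∀ k, z (k + 1) = (1 - lam k) • z k + lam k • (z k + v (k + 1) - x k))
    (hx : ∀ k, x (k + 1) = pJ (z (k + 1)))
    (hfix : ∃ zf : E n,
      (1 / 2 : ℝ) • (((2 : ℝ) • pG ((2 : ℝ) • pJ zf - zf) - ((2 : ℝ) • pJ zf - zf)) + zf)
        = zf) :
    ∃ zs : E n,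
      Tendsto z atTop (𝓝 zs) ∧
      (1 / 2 : ℝ) • (((2 : ℝ) • pG ((2 : ℝ) • pJ zs - zs) - ((2 : ℝ) • pJ zs - zs)) + zs)
        = zs ∧
      Tendsto x atTop (𝓝 (pJ zs)) ∧
      Tendsto v atTop (𝓝 (pJ zs)) ∧
      ∀ y : E n, J (pJ zs) + G (pJ zs) ≤ J y + G y := by
  classical
  obtain ⟨zf, hzf⟩ := hfix
  -- the DR operator
  let T : E n → E n := fun u => (2:ℝ) • pG ((2:ℝ) • pJ u - u) - ((2:ℝ) • pJ u - u)
  have hTdef : ∀ u, T u = (2:ℝ) • pG ((2:ℝ) • pJ u - u) - ((2:ℝ) • pJ u - u) :=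
    fun u => rfl
  -- nonexpansiveness of T
  have hpJlip : ∀ a b, ‖pJ a - pJ b‖ ≤ ‖a - b‖ :=
    fun a b => prox_lip hJproper hJconv hγ (hpJ a) (hpJ b)
  have hpGlip : ∀ a b, ‖pG a - pG b‖ ≤ ‖a - b‖ :=
    fun a b => prox_lip hGproper hGconv hγ (hpG a) (hpG b)
  have hRJ : ∀ a b, ‖((2:ℝ) • pJ a - a) - ((2:ℝ) • pJ b - b)‖ ≤ ‖a - b‖ :=
    fun a b => reflect_lip hJproper hJconv hγ (hpJ a) (hpJ b)
  have hRG : ∀ a b, ‖((2:ℝ) • pG a - a) - ((2:ℝ) • pG b - b)‖ ≤ ‖a - b‖ :=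
    fun a b => reflect_lip hGproper hGconv hγ (hpG a) (hpG b)
  have hTne : ∀ a b, ‖T a - T b‖ ≤ ‖a - b‖ := by
    intro a b
    rw [hTdef, hTdef]
    exact le_trans (hRG ((2:ℝ) • pJ a - a) ((2:ℝ) • pJ b - b)) (hRJ a b)
  -- T zf = zf
  have hTzf : T zf = zf := by
    have h2 : T zf + zf = (2:ℝ) • zf := by
      calc T zf + zf = (2:ℝ) • ((1/2:ℝ) • (T zf + zf)) := by module
        _ = (2:ℝ) • zf := by rw [hTdef]; rw [hzf]
    calc T zf = (T zf + zf) - zf := by abel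
      _ = (2:ℝ) • zf - zf := by rw [h2]
      _ = zf := by module
  -- shifted sequence
  let w : ℕ → E n := fun k => z (k + 1)
  have hwdef : ∀ k, w k = z (k + 1) := fun k => rfl
  let α : ℕ → ℝ := fun k => lam (k + 1) / 2
  have hαdef : ∀ k, α k = lam (k + 1) / 2 := fun k => rfl
  have hα0 : ∀ k, 0 < α k := fun k => by
    rw [hαdef]; have := (hlam (k+1)).1; linarith
  have hα1 : ∀ k, α k ≤ 1 := fun k => by
    rw [hαdef]; have := (hlam (k+1)).2; linarith
  have hrec : ∀ k, w (k + 1) = w k + α k • (T (w k) - w k) := by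
    intro k
    rw [hwdef, hwdef, hαdef, hTdef]
    show z (k + 2) = _
    rw [hz (k+1), hv (k+1), hx k]
    module
  -- Fejér monotonicity
  have fejer : ∀ (u : E n), T u = u → ∀ k,
      ‖w (k+1) - u‖^2 ≤ ‖w k - u‖^2 - (α k * (1 - α k)) * ‖w k - T (w k)‖^2 := by
    intro u hu k
    have hid : ‖(w k + α k • (T (w k) - w k)) - u‖^2
        = (1 - α k)*‖w k - u‖^2 + α k*‖T (w k) - u‖^2
          - α k*(1 - α k)*‖w k - T (w k)‖^2 := by
      have h1 : (w k + α k • (T (w k) - w k)) - u = (w k - u) + α k • (T (w k) - w k) := by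
        module
      have h2 : T (w k) - u = (w k - u) + (T (w k) - w k) := by abel
      have h3 : ‖w k - T (w k)‖ = ‖T (w k) - w k‖ := norm_sub_rev _ _
      rw [h1, norm_add_sq_real, real_inner_smul_right, norm_smul, h2, norm_add_sq_real, h3,
        Real.norm_eq_abs, mul_pow, sq_abs]
      ring
    have hTu : ‖T (w k) - u‖ ≤ ‖w k - u‖ := by
      calc ‖T (w k) - u‖ = ‖T (w k) - T u‖ := by rw [hu]
        _ ≤ ‖w k - u‖ := hTne _ _
    have hTu2 : ‖T (w k) - u‖^2 ≤ ‖w k - u‖^2 := by nlinarith [norm_nonneg (T (w k) - u)]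
    rw [hrec k, hid]
    nlinarith [mul_le_mul_of_nonneg_left hTu2 (hα0 k).le]
  have dmon : ∀ (u : E n), T u = u → ∀ k, ‖w (k+1) - u‖ ≤ ‖w k - u‖ := by
    intro u hu k
    have h1 := fejer u hu k
    have h2 : 0 ≤ (α k * (1 - α k)) * ‖w k - T (w k)‖^2 := by
      exact mul_nonneg (mul_nonneg (hα0 k).le (by linarith [hα1 k])) (sq_nonneg _)
    apply le_of_pow_le_pow_left₀ two_ne_zero (norm_nonneg _)
    linarith
  have dAnti : ∀ (u : E n), T u = u → Antitone (fun k => ‖w k - u‖) :=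
    fun u hu => antitone_nat_of_succ_le (dmon u hu)
  -- residual goes to zero
  have tele : ∀ N, (∑ k ∈ Finset.range N, (α k * (1 - α k)) * ‖w k - T (w k)‖^2)
      + ‖w N - zf‖^2 ≤ ‖w 0 - zf‖^2 := by
    intro N
    induction N with
    | zero => simp
    | succ m ih =>
      rw [Finset.sum_range_succ]
      have := fejer zf hTzf m
      linarith
  have sumbound : ∀ N, ∑ k ∈ Finset.range N, (α k * (1 - α k)) * ‖w k - T (w k)‖^2
      ≤ ‖w 0 - zf‖^2 := by
    intro N; have := tele N; nlinarith [sq_nonneg ‖w N - zf‖]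
  have emonot : Antitone (fun k => ‖w k - T (w k)‖) := by
    apply antitone_nat_of_succ_le
    intro k
    have h3 : w (k+1) - T (w k) = (1 - α k) • (w k - T (w k)) := by rw [hrec k]; module
    have h4 : w (k+1) - w k = α k • (T (w k) - w k) := by rw [hrec k]; module
    have step : w (k+1) - T (w (k+1)) = (w (k+1) - T (w k)) + (T (w k) - T (w (k+1))) := by
      abel
    calc ‖w (k+1) - T (w (k+1))‖
        ≤ ‖w (k+1) - T (w k)‖ + ‖T (w k) - T (w (k+1))‖ := by
          rw [step]; exact norm_add_le _ _
      _ ≤ (1 - α k) * ‖w k - T (w k)‖ + ‖w k - w (k+1)‖ := by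
          have e1 : ‖w (k+1) - T (w k)‖ = (1 - α k) * ‖w k - T (w k)‖ := by
            rw [h3, norm_smul, Real.norm_eq_abs, abs_of_nonneg (by linarith [hα1 k])]
          have e2 : ‖T (w k) - T (w (k+1))‖ ≤ ‖w k - w (k+1)‖ := hTne _ _
          linarith [e1.le, e2]
      _ = ‖w k - T (w k)‖ := by
          have e3 : ‖w k - w (k+1)‖ = α k * ‖w k - T (w k)‖ := by
            rw [norm_sub_rev (w k), h4, norm_smul, Real.norm_eq_abs, abs_of_nonneg (hα0 k).le,
              norm_sub_rev (T (w k))]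
          rw [e3]; ring
  have ezero : Tendsto (fun k => ‖w k - T (w k)‖) atTop (𝓝 0) := by
    have hsmall : ∀ ε : ℝ, 0 < ε → ∃ k, ‖w k - T (w k)‖ < ε := by
      intro ε hε
      by_contra hcon
      push_neg at hcon
      have hdiv' : Tendsto (fun N => ∑ k ∈ Finset.range N, lam (k+1) * (2 - lam (k+1)))
          atTop atTop := by
        have heq : ∀ N, ∑ k ∈ Finset.range N, lam (k+1) * (2 - lam (k+1))
            = (∑ k ∈ Finset.range (N+1), lam k * (2 - lam k)) - lam 0 * (2 - lam 0) := by
          intro N; rw [Finset.sum_range_succ']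
          ring
        apply Tendsto.congr (fun N => (heq N).symm)
        apply tendsto_atTop_add_const_right
        exact hdiv.comp (tendsto_add_atTop_nat 1)
      have key : ∀ N, ∑ k ∈ Finset.range N, lam (k+1) * (2 - lam (k+1))
          ≤ 4 * ‖w 0 - zf‖^2 / ε^2 := by
        intro N
        have hterm : ∀ k ∈ Finset.range N, lam (k+1) * (2 - lam (k+1))
            ≤ 4/ε^2 * ((α k * (1 - α k)) * ‖w k - T (w k)‖^2) := by
          intro k _
          have h2 := hcon k
          have hαeq : α k * (1 - α k) = lam (k+1) * (2 - lam (k+1)) / 4 := by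
            rw [hαdef]; ring
          rw [hαeq]
          have he2 : ε^2 ≤ ‖w k - T (w k)‖^2 := by nlinarith
          have hnn : 0 ≤ lam (k+1) * (2 - lam (k+1)) := by
            nlinarith [(hlam (k+1)).1, (hlam (k+1)).2]
          have hrw : 4/ε^2 * ((lam (k+1) * (2 - lam (k+1)) / 4) * ‖w k - T (w k)‖^2)
              = lam (k+1) * (2 - lam (k+1)) * (‖w k - T (w k)‖^2 / ε^2) := by
            field_simp
          rw [hrw]
          have hge1 : 1 ≤ ‖w k - T (w k)‖^2 / ε^2 := by
            rw [le_div_iff₀ (by positivity)]; linarith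
          nlinarith
        calc ∑ k ∈ Finset.range N, lam (k+1) * (2 - lam (k+1))
            ≤ ∑ k ∈ Finset.range N, 4/ε^2 * ((α k * (1 - α k)) * ‖w k - T (w k)‖^2) :=
              Finset.sum_le_sum hterm
          _ = 4/ε^2 * ∑ k ∈ Finset.range N, (α k * (1 - α k)) * ‖w k - T (w k)‖^2 := by
              rw [Finset.mul_sum]
          _ ≤ 4/ε^2 * ‖w 0 - zf‖^2 := by
              apply mul_le_mul_of_nonneg_left (sumbound N) (by positivity)
          _ = 4 * ‖w 0 - zf‖^2 / ε^2 := by ring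
      obtain ⟨N, hN⟩ := (tendsto_atTop.mp hdiv' (4 * ‖w 0 - zf‖^2 / ε^2 + 1)).exists
      linarith [key N]
    rw [Metric.tendsto_atTop]
    intro ε hε
    obtain ⟨k0, hk0⟩ := hsmall ε hε
    refine ⟨k0, fun k hk => ?_⟩
    rw [Real.dist_eq, sub_zero, abs_of_nonneg (norm_nonneg _)]
    exact lt_of_le_of_lt (emonot hk) hk0
  -- bounded, extract convergent subsequence
  have hbd : ∀ k, w k ∈ Metric.closedBall zf ‖w 0 - zf‖ := by
    intro k
    rw [Metric.mem_closedBall, dist_eq_norm]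
    exact dAnti zf hTzf (Nat.zero_le k)
  obtain ⟨zs, -, φ, hφ, hconv⟩ :=
    tendsto_subseq_of_bounded Metric.isBounded_closedBall hbd
  have hTcont : Continuous T := by
    apply LipschitzWith.continuous (K := 1)
    apply LipschitzWith.of_dist_le_mul
    intro a b
    rw [NNReal.coe_one, one_mul, dist_eq_norm, dist_eq_norm]
    exact hTne a b
  have hpJcont : Continuous pJ := by
    apply LipschitzWith.continuous (K := 1)
    apply LipschitzWith.of_dist_le_mul
    intro a b
    rw [NNReal.coe_one, one_mul, dist_eq_norm, dist_eq_norm]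
    exact hpJlip a b
  have hpGcont : Continuous pG := by
    apply LipschitzWith.continuous (K := 1)
    apply LipschitzWith.of_dist_le_mul
    intro a b
    rw [NNReal.coe_one, one_mul, dist_eq_norm, dist_eq_norm]
    exact hpGlip a b
  -- zs is a fixed point
  have hTzs : T zs = zs := by
    have h1 : Tendsto (fun m => ‖w (φ m) - T (w (φ m))‖) atTop (𝓝 ‖zs - T zs‖) := by
      apply Tendsto.norm
      exact Tendsto.sub hconv ((hTcont.tendsto zs).comp hconv)
    have h2 : Tendsto (fun m => ‖w (φ m) - T (w (φ m))‖) atTop (𝓝 0) :=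
      ezero.comp hφ.tendsto_atTop
    have h3 : ‖zs - T zs‖ = 0 := tendsto_nhds_unique h1 h2
    have h4 : zs - T zs = 0 := norm_eq_zero.mp h3
    have := sub_eq_zero.mp h4
    exact this.symm
  -- w → zs
  have hwz : Tendsto w atTop (𝓝 zs) := by
    rw [Metric.tendsto_atTop]
    intro ε hε
    obtain ⟨m, hm⟩ := Metric.tendsto_atTop.mp hconv ε hε
    refine ⟨φ m, fun k hk => ?_⟩
    have h1 : ‖w k - zs‖ ≤ ‖w (φ m) - zs‖ := dAnti zs hTzs hk
    have h2 := hm m le_rfl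
    rw [Function.comp_apply, dist_eq_norm] at h2
    rw [dist_eq_norm]
    exact lt_of_le_of_lt h1 h2
  -- pG fixed relation at zs
  have hfixv : pG ((2:ℝ) • pJ zs - zs) = pJ zs := by
    have h1 : (2:ℝ) • pG ((2:ℝ) • pJ zs - zs) - ((2:ℝ) • pJ zs - zs) = zs := by
      rw [← hTdef]; exact hTzs
    have h2 : (2:ℝ) • pG ((2:ℝ) • pJ zs - zs) = (2:ℝ) • pJ zs := by
      calc (2:ℝ) • pG ((2:ℝ) • pJ zs - zs)
          = ((2:ℝ) • pG ((2:ℝ) • pJ zs - zs) - ((2:ℝ) • pJ zs - zs)) + ((2:ℝ) • pJ zs - zs) := by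
            abel
        _ = zs + ((2:ℝ) • pJ zs - zs) := by rw [h1]
        _ = (2:ℝ) • pJ zs := by abel
    have h3 := congrArg (fun u => (1/2:ℝ) • u) h2
    simpa [smul_smul] using h3
  refine ⟨zs, ?_, ?_, ?_, ?_, ?_⟩
  · -- z → zs
    exact (tendsto_add_atTop_iff_nat 1).mp hwz
  · -- fixed point equation
    show (1/2:ℝ) • (T zs + zs) = zs
    rw [hTzs]
    module
  · -- x → pJ zs
    have h1 : Tendsto (fun k => x (k+1)) atTop (𝓝 (pJ zs)) := by
      have heq : (fun k => x (k+1)) = fun k => pJ (w k) := by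
        funext k; rw [hx k, hwdef]
      rw [heq]
      exact (hpJcont.tendsto zs).comp hwz
    exact (tendsto_add_atTop_iff_nat 1).mp h1
  · -- v → pJ zs
    have h1 : Tendsto (fun k => v (k+2)) atTop (𝓝 (pJ zs)) := by
      have heq : (fun k => v (k+2)) = fun k => pG ((2:ℝ) • pJ (w k) - w k) := by
        funext k
        rw [show k + 2 = (k+1) + 1 from rfl, hv (k+1), hx k, hwdef]
      rw [heq]
      have h2 : Tendsto (fun k => (2:ℝ) • pJ (w k) - w k) atTop
          (𝓝 ((2:ℝ) • pJ zs - zs)) := by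
        apply Tendsto.sub
        · exact Tendsto.const_smul ((hpJcont.tendsto zs).comp hwz) (2:ℝ)
        · exact hwz
      have h3 := (hpGcont.tendsto ((2:ℝ) • pJ zs - zs)).comp h2
      rw [hfixv] at h3
      exact h3
    exact (tendsto_add_atTop_iff_nat 2).mp h1
  · -- minimizer
    intro y
    have hsub1 : IsSubgrad J (pJ zs) (γ⁻¹ • (zs - pJ zs)) :=
      isSubgrad_of_prox hJproper hJconv hγ (hpJ zs)
    have hprox2 : IsProx G γ ((2:ℝ) • pJ zs - zs) (pJ zs) := by
      have h0 := hpG ((2:ℝ) • pJ zs - zs)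
      rwa [hfixv] at h0
    have hsub2 : IsSubgrad G (pJ zs) (γ⁻¹ • (((2:ℝ) • pJ zs - zs) - pJ zs)) :=
      isSubgrad_of_prox hGproper hGconv hγ hprox2
    have e1 := hsub1 y
    have e2 := hsub2 y
    have hsum : (inner ℝ (γ⁻¹ • (zs - pJ zs)) (y - pJ zs) : ℝ)
        + (inner ℝ (γ⁻¹ • (((2:ℝ) • pJ zs - zs) - pJ zs)) (y - pJ zs) : ℝ) = 0 := by
      rw [← inner_add_left]
      have hz0 : γ⁻¹ • (zs - pJ zs) + γ⁻¹ • (((2:ℝ) • pJ zs - zs) - pJ zs) = 0 := by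
        module
      rw [hz0, inner_zero_left]
    calc J (pJ zs) + G (pJ zs)
        = (J (pJ zs) + ((inner ℝ (γ⁻¹ • (zs - pJ zs)) (y - pJ zs) : ℝ) : EReal))
          + (G (pJ zs) + ((inner ℝ (γ⁻¹ • (((2:ℝ) • pJ zs - zs) - pJ zs)) (y - pJ zs) : ℝ) : EReal)) := by
          rw [add_add_add_comm, ← EReal.coe_add, hsum, EReal.coe_zero, add_zero]
      _ ≤ J y + G y := add_le_add e1 e2
end
end
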